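/- Let (X, 0, f) and (Y, 0, g) be pointed modules (f 0 = 0, g 0 = 0) and let h be the structure map of their smash product on X × Y. Then h is nilpotent (for every p ∈ X × Y there exists n with h^[n] p = (0,0)) if and only if f is nilpotent or g is nilpotent. -/
import Mathlib


/-- **Proposition (nilpotence of the smash product).**
Let `(X, 0, f)` and `(Y, 0, g)` be pointed modules (models of `⟨t⟩`-modules over `F₁`)
and let `h` be the structure map of their smash product on `X × Y`.  Then `h` is
nilpotent if and only if `f` is nilpotent or `g` is nilpotent. -/
theorem smash_nilpotent_iff {X Y : Type*} [Zero X] [Zero Y]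
    [DecidableEq X] [DecidableEq Y]
    (f : X → X) (g : Y → Y) (hf : f 0 = 0) (hg : g 0 = 0)
    (h : X × Y → X × Y)
    (hh : ∀ p : X × Y,
      h p = if f p.1 ≠ 0 ∧ g p.2 ≠ 0 then (f p.1, g p.2) else (0, 0)) :
    (∀ p : X × Y, ∃ n : ℕ, h^[n] p = (0, 0)) ↔
      ((∀ x : X, ∃ n : ℕ, f^[n] x = 0) ∨ (∀ y : Y, ∃ n : ℕ, g^[n] y = 0)) := by
  have h00 : h (0, 0) = (0, 0) := by
    rw [hh]; simp [hf]
  have key : ∀ (p : X × Y) (n : ℕ),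
      h^[n] p = (f^[n] p.1, g^[n] p.2) ∨ h^[n] p = (0, 0) := by
    intro p n
    induction n with
    | zero => left; simp
    | succ n ih =>
      rw [Function.iterate_succ_apply']
      rcases ih with h1 | h1
      · rw [h1, hh]
        by_cases hc : f (f^[n] p.1) ≠ 0 ∧ g (g^[n] p.2) ≠ 0
        · left
          rw [if_pos hc]
          simp [Function.iterate_succ_apply']
        · right; rw [if_neg hc]
      · right; rw [h1, h00]
  constructor
  · intro H
    by_contra hcon
    push_neg at hcon
    obtain ⟨⟨x, hx⟩, ⟨y, hy⟩⟩ := hcon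
    obtain ⟨n, hn⟩ := H (x, y)
    have hfix : ∀ m, h^[m] (x, y) = (f^[m] x, g^[m] y) := by
      intro m
      induction m with
      | zero => simp
      | succ m ih =>
        rw [Function.iterate_succ_apply', ih, hh]
        have hx' := hx (m + 1)
        have hy' := hy (m + 1)
        rw [Function.iterate_succ_apply'] at hx' hy'
        rw [if_pos ⟨hx', hy'⟩]
        simp [Function.iterate_succ_apply']
    rw [hfix n] at hn
    exact hx n (congrArg Prod.fst hn)
  · rintro (Hf | Hg) p
    · obtain ⟨n, hn⟩ := Hf p.1
      refine ⟨n + 1, ?_⟩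
      rw [Function.iterate_succ_apply']
      rcases key p n with h1 | h1
      · rw [h1, hh]
        simp [hn, hf]
      · rw [h1, h00]
    · obtain ⟨n, hn⟩ := Hg p.2
      refine ⟨n + 1, ?_⟩
      rw [Function.iterate_succ_apply']
      rcases key p n with h1 | h1
      · rw [h1, hh]
        simp [hn, hg]
      · rw [h1, h00]
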